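/- Every nontrivial commutative normal subgroup of the dihedral group of order 12 contains the rotation r 2 (the rotation by 120°) or the rotation r 3 (the rotation by 180°). -/

import Mathlib

theorem stmt_3 (N : Subgroup (DihedralGroup 6)) (hN : N.Normal)
    (hcomm : ∀ x ∈ N, ∀ y ∈ N, x * y = y * x) (hnt : N ≠ ⊥) :
    DihedralGroup.r 2 ∈ N ∨ DihedralGroup.r 3 ∈ N := by
  obtain ⟨⟨x, hxN⟩, hx1'⟩ := Subgroup.ne_bot_iff_exists_ne_one.mp hnt
  have hx1 : x ≠ 1 := by simpa [Subtype.ext_iff] using hx1'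
  match x with
  | DihedralGroup.r i =>
    have hi : (i : ZMod 6) ≠ 0 := by
      intro h; exact hx1 (by simp [h])
    fin_cases i
    · exact absurd rfl hi
    · left
      have := mul_mem hxN hxN
      convert this using 2 <;> decide
    · left; exact hxN
    · right; exact hxN
    · left
      have := mul_mem hxN hxN
      convert this using 2 <;> decide
    · left
      have := mul_mem (mul_mem hxN hxN) (mul_mem hxN hxN)
      convert this using 2 <;> decide
  | DihedralGroup.sr i =>
    left
    have h2 : DihedralGroup.r 1 * DihedralGroup.sr i * (DihedralGroup.r 1)⁻¹ ∈ N :=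
      hN.conj_mem _ hxN _
    have h4 : DihedralGroup.sr i * (DihedralGroup.r 1 * DihedralGroup.sr i *
        (DihedralGroup.r 1)⁻¹) = DihedralGroup.r 4 := by
      have : (DihedralGroup.r 1 : DihedralGroup 6)⁻¹ = DihedralGroup.r 5 := by decide
      simp [this]
      ring_nf
    have := mul_mem hxN h2
    rw [h4] at this
    have h42 : DihedralGroup.r (4 : ZMod 6) * DihedralGroup.r 4 = DihedralGroup.r 2 := by decide
    have := mul_mem this this
    rwa [h42] at this
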